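/- arXiv:1001.4928 — 3 statements merged into one kernel-verified Lean document; each statement's English description precedes it below -/
import Mathlib

section
/- Let F and D be n×n complex matrices and let w be a nonzero real number (viewed in ℂ). Suppose F² = F, FD = D, DF = D, and D² = (w−1)·F + (w−2)·D. Then E := w⁻¹·(F + D) satisfies E² = E, (F − E)² = F − E, and E·(F − E) = (F − E)·E = 0. Moreover, if trace(D) = 0, then trace(E) = w⁻¹·trace(F). -/
theorem stmt_0 {n : ℕ} (F D : Matrix (Fin n) (Fin n) ℂ) (w : ℝ) (hw : w ≠ 0)
    (hF : F * F = F) (hFD : F * D = D) (hDF : D * F = D)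
    (hD2 : D * D = ((w : ℂ) - 1) • F + ((w : ℂ) - 2) • D) :
    let E := (w : ℂ)⁻¹ • (F + D)
    E * E = E ∧ (F - E) * (F - E) = F - E ∧ E * (F - E) = 0 ∧ (F - E) * E = 0 ∧
      (D.trace = 0 → E.trace = (w : ℂ)⁻¹ * F.trace) := by
  intro E
  have hw' : (w : ℂ) ≠ 0 := by exact_mod_cast hw
  have key : (F + D) * (F + D) = (w : ℂ) • (F + D) := by
    rw [add_mul, mul_add, mul_add, hF, hFD, hDF, hD2]
    module
  have hE2 : E * E = E := by
    show ((w : ℂ)⁻¹ • (F + D)) * ((w : ℂ)⁻¹ • (F + D)) = (w : ℂ)⁻¹ • (F + D)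
    rw [smul_mul_smul_comm, key, smul_smul]
    congr 1
    field_simp
  have hFE : F * E = E := by
    show F * ((w : ℂ)⁻¹ • (F + D)) = (w : ℂ)⁻¹ • (F + D)
    rw [mul_smul_comm, mul_add, hF, hFD]
  have hEF : E * F = E := by
    show ((w : ℂ)⁻¹ • (F + D)) * F = (w : ℂ)⁻¹ • (F + D)
    rw [smul_mul_assoc, add_mul, hF, hDF]
  refine ⟨hE2, ?_, ?_, ?_, ?_⟩
  · rw [sub_mul, mul_sub, mul_sub, hF, hFE, hEF, hE2]
    abel
  · rw [mul_sub, hEF, hE2, sub_self]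
  · rw [sub_mul, hFE, hE2, sub_self]
  · intro h
    show ((w : ℂ)⁻¹ • (F + D)).trace = (w : ℂ)⁻¹ * F.trace
    rw [Matrix.trace_smul, Matrix.trace_add, h, add_zero, smul_eq_mul]
end

section
/- Let A be a symmetric real n×n matrix of rank r. Then the rank of the Hadamard (entrywise) square A ∘ A is at most r(r+1)/2. -/
theorem stmt_7 {n : ℕ} (A : Matrix (Fin n) (Fin n) ℝ) (hA : A.IsSymm) (r : ℕ)
    (hr : A.rank = r) :
    (Matrix.hadamard A A).rank ≤ r * (r + 1) / 2 := by
  classical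
  have hH : A.IsHermitian := by
    rw [Matrix.IsHermitian, Matrix.conjTranspose]
    ext i j; simpa using congrFun (congrFun hA.eq i) j
  set U : Matrix (Fin n) (Fin n) ℝ := (hH.eigenvectorUnitary : Matrix (Fin n) (Fin n) ℝ) with hU
  set lam : Fin n → ℝ := hH.eigenvalues with hlam
  have hspec : ∀ x y, A x y = ∑ i, lam i * (U x i * U y i) := by
    intro x y
    conv_lhs => rw [hH.spectral_theorem]
    simp [hU, hlam, Matrix.mul_apply, Matrix.mul_diagonal, Matrix.star_apply,
      Matrix.diagonal_apply, ite_mul, zero_mul, Finset.sum_ite_eq, mul_comm, mul_left_comm, mul_assoc]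
  -- the two factor matrices
  set C : Matrix (Fin n) (Fin n × Fin n) ℝ :=
    Matrix.of (fun x p => lam p.1 * lam p.2 * (U x p.1 * U x p.2)) with hC
  set B : Matrix (Fin n × Fin n) (Fin n) ℝ :=
    Matrix.of (fun p y => U y p.1 * U y p.2) with hB
  have hfact : Matrix.hadamard A A = C * B := by
    ext x y
    rw [Matrix.hadamard_apply, Matrix.mul_apply, hspec x y, Finset.sum_mul_sum]
    rw [← Finset.sum_product']
    rw [show (Finset.univ ×ˢ Finset.univ : Finset (Fin n × Fin n)) = Finset.univ from rfl]
    apply Finset.sum_congr rfl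
    intro p _
    simp [hC, hB]
    ring
  -- index type for the "sorted, nonzero" pairs
  set S := {p : Fin n × Fin n // p.1 ≤ p.2 ∧ lam p.1 ≠ 0 ∧ lam p.2 ≠ 0} with hS
  set sortf : Fin n × Fin n → Fin n × Fin n := fun p => if p.1 ≤ p.2 then p else (p.2, p.1)
    with hsortf
  set C₀ : Matrix (Fin n) S ℝ := Matrix.of (fun x s => C x s.val) with hC0
  set P : Matrix S (Fin n × Fin n) ℝ :=
    Matrix.of (fun s p => if s.val = sortf p then 1 else 0) with hP
  have hCfact : C = C₀ * P := by
    ext x p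
    rw [Matrix.mul_apply]
    simp only [hC0, hP, Matrix.of_apply, mul_ite, mul_one, mul_zero]
    by_cases hnz : lam p.1 ≠ 0 ∧ lam p.2 ≠ 0
    · have hq : (sortf p).1 ≤ (sortf p).2 ∧ lam (sortf p).1 ≠ 0 ∧ lam (sortf p).2 ≠ 0 := by
        rw [hsortf]
        by_cases h : p.1 ≤ p.2
        · simp [h, hnz.1, hnz.2]
        · simp [h, hnz.1, hnz.2, le_of_lt (lt_of_not_ge h)]
      rw [Finset.sum_eq_single (⟨sortf p, hq⟩ : S)]
      · have : C x (sortf p) = C x p := by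
          rw [hsortf]; by_cases h : p.1 ≤ p.2
          · simp [h]
          · simp only [h, if_false, hC, Matrix.of_apply]; ring
        simp [this]
      · intro s _ hs
        have : s.val ≠ sortf p := fun h => hs (Subtype.ext h)
        simp [this]
      · intro h
        exact absurd (Finset.mem_univ _) h
    · have hz : C x p = 0 := by
        rw [hC]
        rcases not_and_or.mp hnz with h | h <;>
          simp [not_not.mp h, Matrix.of_apply]
      rw [hz]
      symm
      apply Finset.sum_eq_zero
      intro s _
      have : s.val ≠ sortf p := by
        intro h
        rcases s.property with ⟨_, h1, h2⟩
        rw [h] at h1 h2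
        apply hnz
        rw [hsortf] at h1 h2
        by_cases hle : p.1 ≤ p.2
        · simp [hle] at h1 h2; exact ⟨h1, h2⟩
        · simp [hle] at h1 h2; exact ⟨h2, h1⟩
      simp [this]
  -- cardinality bound
  have hcardT : Fintype.card {i // lam i ≠ 0} = r := by
    rw [← hr, hH.rank_eq_card_non_zero_eigs]
  have hcardS : Fintype.card S ≤ r * (r + 1) / 2 := by
    have hinj : Function.Injective (fun s : S =>
        (s((⟨s.val.1, s.property.2.1⟩ : {i // lam i ≠ 0}), (⟨s.val.2, s.property.2.2⟩ : {i // lam i ≠ 0})) :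
          Sym2 {i // lam i ≠ 0})) := by
      rintro ⟨⟨a, b⟩, hab, ha, hb⟩ ⟨⟨c, d⟩, hcd, hc, hd⟩ h
      simp only [Sym2.eq, Sym2.rel_iff', Prod.mk.injEq, Subtype.mk.injEq, Prod.swap_prod_mk]
        at h
      rcases h with ⟨h1, h2⟩ | ⟨h1, h2⟩
      · exact Subtype.ext (Prod.ext h1 h2)
      · have hab' : a ≤ b := hab
        have hcd' : c ≤ d := hcd
        have hac : a = c := le_antisymm (h2 ▸ hab') (h1.symm ▸ hcd')
        have hbd : b = d := le_antisymm (h2.symm ▸ hcd') (h1 ▸ hab')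
        exact Subtype.ext (Prod.ext hac hbd)
    have := Fintype.card_le_of_injective _ hinj
    have hsym : Fintype.card (Sym2 {i // lam i ≠ 0}) = r * (r + 1) / 2 := by
      rw [Sym2.card, hcardT, Nat.choose_two_right, Nat.add_sub_cancel, Nat.mul_comm]
    exact this.trans hsym.le
  calc (Matrix.hadamard A A).rank = (C * B).rank := by rw [hfact]
    _ ≤ C.rank := Matrix.rank_mul_le_left C B
    _ = (C₀ * P).rank := by rw [hCfact]
    _ ≤ C₀.rank := Matrix.rank_mul_le_left C₀ P
    _ ≤ Fintype.card S := Matrix.rank_le_card_width C₀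
    _ ≤ r * (r + 1) / 2 := hcardS
end

section
/- With the hypotheses and conclusions of the block decomposition above, assume additionally that all row and column sums of C are equal, i.e., C·Jₙ = (k₀ − k)·Jₙ and Jₙ·C = (k₀ − k)·Jₙ for some real k₀, k. Then (a − a′)·(M₁·C − C·M₂) = 0. In particular, if a ≠ a′ then M₁·C = C·M₂. -/
open Matrix

/-- The all-ones matrix. -/
def allOnes (m : Type*) : Matrix m m ℝ := Matrix.of fun _ _ => 1

theorem stmt_10 {n : ℕ} (M₁ M₂ C : Matrix (Fin n) (Fin n) ℝ) (a b c a' b' c' k₀ k : ℝ)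
    (hCCt : C * Cᵀ =
      (a - a') • M₁ + (b - b') • (1 : Matrix _ _ ℝ) + (c - c') • allOnes (Fin n))
    (hCtC : Cᵀ * C =
      (a - a') • M₂ + (b - b') • (1 : Matrix _ _ ℝ) + (c - c') • allOnes (Fin n))
    (hrow : C * allOnes (Fin n) = (k₀ - k) • allOnes (Fin n))
    (hcol : allOnes (Fin n) * C = (k₀ - k) • allOnes (Fin n)) :
    (a - a') • (M₁ * C - C * M₂) = 0 ∧ (a ≠ a' → M₁ * C = C * M₂) := by
  have assoc : (C * Cᵀ) * C = C * (Cᵀ * C) := mul_assoc _ _ _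
  rw [hCCt, hCtC] at assoc
  simp only [add_mul, mul_add, Matrix.smul_mul, Matrix.mul_smul, one_mul, mul_one,
    hrow, hcol] at assoc
  have key : (a - a') • (M₁ * C - C * M₂) = 0 := by
    rw [smul_sub]
    rw [sub_eq_zero]
    have := add_right_cancel (add_right_cancel assoc)
    exact this
  refine ⟨key, fun h => ?_⟩
  have ha : a - a' ≠ 0 := sub_ne_zero.mpr h
  have := smul_eq_zero.mp key
  rcases this with h1 | h2
  · exact absurd h1 ha
  · exact sub_eq_zero.mp h2
end
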